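/- (Gronwall-type lemma.) Let S > 0, a ≥ 0 and b > 0, and let v : [0,S] → ℝ be a nonnegative continuous function. Suppose there is a Lebesgue-integrable function w on [0,S] such that v(t)² = v(0)² + ∫₀ᵗ w(s) ds for every t ∈ [0,S] and w(s) ≤ 2( a v(s) − b v(s)² ) for almost every s ∈ [0,S]. Then for every t ∈ [0,S], v(t) ≤ e^{−bt} v(0) + (a/b)(1 − e^{−bt}). -/

import Mathlib

open Set MeasureTheory

/-- **Gronwall-type lemma.** Let `S > 0`, `a ≥ 0`, `b > 0` and let
`v : [0,S] → ℝ` be nonnegative and continuous.  Suppose `w` is Lebesgue integrable on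
`[0,S]` with `v(t)² = v(0)² + ∫₀ᵗ w` for every `t ∈ [0,S]` and
`w(s) ≤ 2(a v(s) − b v(s)²)` for a.e. `s ∈ [0,S]`.  Then
`v(t) ≤ e^{−bt} v(0) + (a/b)(1 − e^{−bt})` for every `t ∈ [0,S]`. -/
theorem gronwall_type (S a b : ℝ) (hS : 0 < S) (ha : 0 ≤ a) (hb : 0 < b)
    (v : ℝ → ℝ) (hv : ContinuousOn v (Icc 0 S)) (hvnn : ∀ t ∈ Icc (0:ℝ) S, 0 ≤ v t)
    (w : ℝ → ℝ) (hw : IntegrableOn w (Icc 0 S))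
    (heq : ∀ t ∈ Icc (0:ℝ) S, v t ^ 2 = v 0 ^ 2 + ∫ s in (0:ℝ)..t, w s)
    (hle : ∀ᵐ s ∂(volume.restrict (Icc (0:ℝ) S)), w s ≤ 2 * (a * v s - b * v s ^ 2)) :
    ∀ t ∈ Icc (0:ℝ) S,
      v t ≤ Real.exp (-b * t) * v 0 + a / b * (1 - Real.exp (-b * t)) := by
  have hb' : b ≠ 0 := ne_of_gt hb
  -- interval integrability of w on subintervals
  have hInt : ∀ p ∈ Icc (0:ℝ) S, ∀ q ∈ Icc (0:ℝ) S, IntervalIntegrable w volume p q := by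
    intro p hp q hq
    rw [intervalIntegrable_iff]
    exact hw.mono_set (uIoc_subset_uIcc.trans (uIcc_subset_Icc hp hq))
  -- the integral identity on subintervals
  have hv2 : ∀ r ∈ Icc (0:ℝ) S, ∀ t ∈ Icc (0:ℝ) S,
      v t ^ 2 - v r ^ 2 = ∫ s in r..t, w s := by
    intro r hr t ht
    have h0 : (0:ℝ) ∈ Icc (0:ℝ) S := ⟨le_rfl, hS.le⟩
    have := intervalIntegral.integral_interval_sub_left (hInt 0 h0 t ht) (hInt 0 h0 r hr)
    rw [heq t ht, heq r hr]
    linarith [this]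
  -- main claim with ε-shifted initial data
  have key : ∀ ε : ℝ, 0 < ε → ∀ t ∈ Icc (0:ℝ) S,
      v t ≤ Real.exp (-b*t) * (v 0 + ε) + a / b * (1 - Real.exp (-b*t)) := by
    intro ε hε
    set φ : ℝ → ℝ := fun t => Real.exp (-b*t) * (v 0 + ε) + a / b * (1 - Real.exp (-b*t))
      with hφdef
    clear_value φ
    have hφc : Continuous φ := by rw [hφdef]; fun_prop
    have hφ0 : φ 0 = v 0 + ε := by simp [hφdef]
    -- derivative of φ
    have hφd : ∀ t : ℝ, HasDerivAt φ (a - b * φ t) t := by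
      intro t
      have he : HasDerivAt (fun t : ℝ => Real.exp (-b*t)) (Real.exp (-b*t) * (-b)) t := by
        have h1 : HasDerivAt (fun t : ℝ => -b * t) (-b) t := by
          simpa using (hasDerivAt_id t).const_mul (-b)
        exact h1.exp
      have h2 : HasDerivAt (fun t : ℝ => Real.exp (-b*t) * (v 0 + ε) + a / b * (1 - Real.exp (-b*t)))
          ((Real.exp (-b*t) * (-b)) * (v 0 + ε) + a / b * (0 - Real.exp (-b*t) * (-b))) t :=
        (he.mul_const (v 0 + ε)).add (((hasDerivAt_const t (1:ℝ)).sub he).const_mul (a/b))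
      rw [hφdef]
      convert h2 using 1
      field_simp
      ring
    have hφsqd : ∀ t : ℝ, HasDerivAt (fun t => φ t ^ 2)
        (2 * (a * φ t - b * φ t ^ 2)) t := by
      intro t
      have := (hφd t).fun_pow 2
      refine this.congr_deriv ?_
      ring
    have hφint : ∀ r t : ℝ, φ t ^ 2 - φ r ^ 2 = ∫ s in r..t, 2 * (a * φ s - b * φ s ^ 2) := by
      intro r t
      exact (intervalIntegral.integral_eq_sub_of_hasDerivAt (fun s _ => hφsqd s)
        ((Continuous.intervalIntegrable (by fun_prop) r t))).symm
    -- main comparison claim : v ≤ φ on [0,S]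
    have main : ∀ t ∈ Icc (0:ℝ) S, v t ≤ φ t := by
      by_contra hcon
      push_neg at hcon
      obtain ⟨t₀, ht₀, hlt0⟩ := hcon
      set B := {t | t ∈ Icc (0:ℝ) S ∧ 0 ≤ v t - φ t} with hBdef
      clear_value B
      have hBmem : ∀ x, x ∈ B ↔ (x ∈ Icc (0:ℝ) S ∧ 0 ≤ v x - φ x) := by
        intro x; rw [hBdef]; simp
      have hBne : B.Nonempty := ⟨t₀, (hBmem t₀).2 ⟨ht₀, by linarith⟩⟩
      have hBbdd : BddBelow B := ⟨0, fun x hx => ((hBmem x).1 hx).1.1⟩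
      have hBc : IsClosed B := by
        have : B = Icc (0:ℝ) S ∩ (fun t => v t - φ t) ⁻¹' Ici 0 := by
          ext x; rw [hBmem x]; simp [mem_Ici]
        rw [this]
        exact ContinuousOn.preimage_isClosed_of_isClosed
          (hv.sub hφc.continuousOn) isClosed_Icc isClosed_Ici
      set T := sInf B with hTdef
      clear_value T
      have hTB : T ∈ Icc (0:ℝ) S ∧ 0 ≤ v T - φ T := by
        rw [← hBmem T, hTdef]
        exact hBc.csInf_mem hBne hBbdd
      have hTS : T ∈ Icc (0:ℝ) S := hTB.1
      have hT0 : 0 < T := by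
        rcases lt_or_eq_of_le hTS.1 with h | h
        · exact h
        · exfalso
          have := hTB.2
          rw [← h] at this
          rw [hφ0] at this
          linarith
      -- strict inequality before T
      have hlt' : ∀ r, 0 ≤ r → r < T → v r < φ r := by
        intro r hr0 hrT
        by_contra hcon2
        push_neg at hcon2
        have hrB : r ∈ B := (hBmem r).2 ⟨⟨hr0, hrT.le.trans hTS.2⟩, by linarith⟩
        have := csInf_le hBbdd hrB
        rw [← hTdef] at this
        exact absurd this (not_le.2 hrT)
      -- v T = φ T
      have hvT : v T = φ T := by
        have hle' : v T - φ T ≤ 0 := by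
          have hTcl : T ∈ closure (Ico 0 T) := by
            rw [closure_Ico (ne_of_lt hT0)]
            exact ⟨hT0.le, le_rfl⟩
          have hcw : ContinuousWithinAt (fun t => v t - φ t) (Ico 0 T) T := by
            exact ((hv.sub hφc.continuousOn).continuousWithinAt hTS).mono
              (fun x hx => ⟨hx.1, hx.2.le.trans hTS.2⟩)
          have hne : (nhdsWithin T (Ico 0 T)).NeBot :=
            mem_closure_iff_nhdsWithin_neBot.1 hTcl
          refine le_of_tendsto hcw ?_
          filter_upwards [self_mem_nhdsWithin] with r hr
          have := hlt' r hr.1 hr.2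
          linarith
        have := hTB.2
        linarith
      -- choose s shortly before T
      set s := max 0 (T - 1/(4*b)) with hsdef
      clear_value s
      have hs0 : 0 ≤ s := by rw [hsdef]; exact le_max_left _ _
      have hsT : s < T := by
        rw [hsdef]
        apply max_lt hT0
        have : 0 < 1/(4*b) := by positivity
        linarith
      have hsS : s ∈ Icc (0:ℝ) S := ⟨hs0, hsT.le.trans hTS.2⟩
      have hTs : T - s ≤ 1/(4*b) := by
        have h := le_max_right (0:ℝ) (T - 1/(4*b))
        rw [← hsdef] at h
        linarith
      set g : ℝ → ℝ := fun ρ => φ ρ ^ 2 - v ρ ^ 2 with hgdef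
      clear_value g
      have hsub : Icc s T ⊆ Icc (0:ℝ) S := Icc_subset_Icc hs0 hTS.2
      have hgc : ContinuousOn g (Icc s T) := by
        rw [hgdef]
        exact ((hφc.continuousOn.pow 2).sub ((hv.mono hsub).pow 2))
      obtain ⟨ρ₀, hρ₀mem, hρ₀max⟩ :=
        isCompact_Icc.exists_isMaxOn ⟨T, hsT.le, le_rfl⟩ hgc
      -- the core integral inequality
      have core : ∀ r ∈ Icc s T, g r ≤ 2 * b * (T - r) * g ρ₀ := by
        intro r hr
        have hrS : r ∈ Icc (0:ℝ) S := hsub hr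
        have e1 : v T ^ 2 - v r ^ 2 = ∫ ρ in r..T, w ρ := hv2 r hrS T hTS
        have e2 : φ T ^ 2 - φ r ^ 2 = ∫ ρ in r..T, 2 * (a * φ ρ - b * φ ρ ^ 2) :=
          hφint r T
        have hint1 : IntervalIntegrable w volume r T := hInt r hrS T hTS
        have hint2 : IntervalIntegrable (fun ρ => 2 * (a * φ ρ - b * φ ρ ^ 2)) volume r T :=
          Continuous.intervalIntegrable (by fun_prop) r T
        have hint3 : IntervalIntegrable (fun ρ => w ρ - 2 * (a * φ ρ - b * φ ρ ^ 2))
            volume r T := hint1.sub hint2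
        have hint4 : IntervalIntegrable (fun _ : ℝ => 2 * b * g ρ₀) volume r T :=
          intervalIntegrable_const
        have hae : ∀ᵐ ρ ∂(volume.restrict (Icc r T)),
            w ρ - 2 * (a * φ ρ - b * φ ρ ^ 2) ≤ 2 * b * g ρ₀ := by
          have h1 := ae_restrict_of_ae_restrict_of_subset
            (Icc_subset_Icc hrS.1 hTS.2) hle
          have h2 := ae_restrict_mem (μ := volume) (measurableSet_Icc (a := r) (b := T))
          filter_upwards [h1, h2] with ρ hwρ hρ
          have hρsT : ρ ∈ Icc s T := ⟨hr.1.trans hρ.1, hρ.2⟩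
          have hvφ : v ρ ≤ φ ρ := by
            rcases lt_or_eq_of_le hρ.2 with h | h
            · exact (hlt' ρ (hs0.trans hρsT.1) h).le
            · rw [h, hvT]
          have hgρ : g ρ ≤ g ρ₀ := hρ₀max hρsT
          have p1 : 0 ≤ a * (φ ρ - v ρ) := mul_nonneg ha (by linarith)
          have p2 : b * (φ ρ ^ 2 - v ρ ^ 2) ≤ b * g ρ₀ := by
            apply mul_le_mul_of_nonneg_left _ hb.le
            simpa [hgdef] using hgρ
          linarith
        have hmono := intervalIntegral.integral_mono_ae_restrict
          (by linarith [hr.2] : r ≤ T) hint3 hint4 hae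
        have hsplit : (∫ ρ in r..T, (w ρ - 2 * (a * φ ρ - b * φ ρ ^ 2))) =
            (∫ ρ in r..T, w ρ) - ∫ ρ in r..T, 2 * (a * φ ρ - b * φ ρ ^ 2) :=
          intervalIntegral.integral_sub hint1 hint2
        have hconst : (∫ _ in r..T, (2 * b * g ρ₀)) = (T - r) * (2 * b * g ρ₀) := by
          rw [intervalIntegral.integral_const, smul_eq_mul]
        have hgr : g r = (∫ ρ in r..T, w ρ) - ∫ ρ in r..T, 2 * (a * φ ρ - b * φ ρ ^ 2) := by
          have hgT : φ T ^ 2 - v T ^ 2 = 0 := by rw [hvT]; ring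
          simp only [hgdef]
          linarith [e1, e2]
        rw [hsplit, hconst] at hmono
        rw [hgr]
        linarith
      -- derive contradiction
      have hgT0 : g T = 0 := by simp only [hgdef]; rw [hvT]; ring
      have hgρ₀nn : 0 ≤ g ρ₀ := by
        have h : g T ≤ g ρ₀ := hρ₀max (⟨hsT.le, le_rfl⟩ : T ∈ Icc s T)
        simp only [hgdef] at h hgT0 ⊢
        linarith
      have h1 := core ρ₀ hρ₀mem
      have h2 : 2 * b * (T - ρ₀) * g ρ₀ ≤ (1/2) * g ρ₀ := by
        apply mul_le_mul_of_nonneg_right _ hgρ₀nn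
        have hρ₀s : s ≤ ρ₀ := hρ₀mem.1
        have : T - ρ₀ ≤ 1/(4*b) := by linarith
        calc 2 * b * (T - ρ₀) ≤ 2 * b * (1/(4*b)) := by
              apply mul_le_mul_of_nonneg_left this (by linarith)
          _ = 1/2 := by field_simp; ring
      have h12 : g ρ₀ ≤ 1/2 * g ρ₀ := le_trans h1 h2
      have hgρ₀0 : g ρ₀ ≤ 0 := by linarith
      have hgs : 0 < g s := by
        have hvs : v s < φ s := hlt' s hs0 hsT
        have : v s ^ 2 < φ s ^ 2 :=
          pow_lt_pow_left₀ hvs (hvnn s hsS) (by norm_num)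
        simp only [hgdef]
        linarith
      have hsmax : g s ≤ g ρ₀ := hρ₀max (⟨le_rfl, hsT.le⟩ : s ∈ Icc s T)
      linarith
    intro t' ht'
    have h := main t' ht'
    rw [hφdef] at h
    simpa using h
  -- take ε → 0
  intro t ht
  by_contra hcon
  push_neg at hcon
  set E := Real.exp (-b*t) with hEdef
  clear_value E
  set Y := E * v 0 + a / b * (1 - E) with hYdef
  clear_value Y
  have hδ0 : 0 < v t - Y := by linarith
  have hk := key ((v t - Y)/2) (by linarith) t ht
  rw [← hEdef] at hk
  have hexp1 : E ≤ 1 := by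
    rw [hEdef, Real.exp_le_one_iff]
    nlinarith [ht.1]
  have hexp0 : 0 < E := by rw [hEdef]; exact Real.exp_pos _
  have h5 : E * ((v t - Y)/2) ≤ (v t - Y)/2 :=
    mul_le_of_le_one_left (by linarith) hexp1
  have h6 : E * (v 0 + (v t - Y)/2) + a / b * (1 - E) = Y + E * ((v t - Y)/2) := by
    rw [hYdef]; ring
  rw [h6] at hk
  linarith
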